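/- Let V ⊂ (C*)^n be an algebraic variety with defining ideal I(V), and let r ∈ (R_{>0})^n be such that the torus T_r = {z : |z_i| = r_i ∀i} does not intersect V. Then there exists a Laurent polynomial G ∈ I(V) such that the hypersurface V_G does not intersect T_r. In particular, if Log(r) ∉ amoeba(V), then Log(r) ∉ amoeba(V_G) for some G ∈ I(V). -/

import Mathlib

open MvPolynomial

noncomputable def myRefl (n N : ℕ) (r : Fin n → ℝ) (f : MvPolynomial (Fin n) ℂ) :
    MvPolynomial (Fin n) ℂ :=
  ∑ α ∈ f.support, monomial (Finsupp.equivFunOnFinite.symm fun i => N - α i)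
    ((starRingEnd ℂ) (coeff α f) * ∏ i, ((r i : ℂ)) ^ (2 * α i))

lemma coord_le_sum {n : ℕ} (α : Fin n →₀ ℕ) (i : Fin n) : α i ≤ α.sum fun _ e => e := by
  rcases Nat.eq_zero_or_pos (α i) with h | h
  · simp [h]
  · exact Finset.single_le_sum (fun j _ => Nat.zero_le _) (Finsupp.mem_support_iff.2 h.ne')

lemma eval_myRefl (n N : ℕ) (r : Fin n → ℝ) (f : MvPolynomial (Fin n) ℂ)
    (z : Fin n → ℂ) (hz : ∀ i, ‖z i‖ = r i) (hN : f.totalDegree ≤ N) :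
    eval z (myRefl n N r f) = (∏ i, z i ^ N) * (starRingEnd ℂ) (eval z f) := by
  rw [eval_eq' (f := f)]
  rw [map_sum, Finset.mul_sum]
  unfold myRefl
  rw [map_sum]
  apply Finset.sum_congr rfl
  intro α hα
  rw [eval_monomial, Finsupp.prod_fintype _ _ (fun i => pow_zero _)]
  simp only [Finsupp.equivFunOnFinite_symm_apply_apply]
  rw [map_mul, map_prod]
  simp only [map_pow]
  have key : (∏ i, ((r i : ℂ)) ^ (2 * α i)) * ∏ i, z i ^ (N - α i)
      = (∏ i, z i ^ N) * ∏ i, (starRingEnd ℂ) (z i) ^ α i := by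
    rw [← Finset.prod_mul_distrib, ← Finset.prod_mul_distrib]
    apply Finset.prod_congr rfl
    intro i _
    have hle : α i ≤ N := le_trans (le_trans (coord_le_sum α i) (le_totalDegree hα)) hN
    have h1 : ((r i : ℂ)) ^ (2 * α i) = (z i * (starRingEnd ℂ) (z i)) ^ (α i) := by
      rw [Complex.mul_conj, ← Complex.sq_norm, hz i]
      push_cast
      rw [pow_mul, ← Complex.ofReal_pow]
    rw [h1, mul_pow, mul_right_comm, ← pow_add, Nat.add_sub_cancel' hle]
  rw [mul_assoc, key]; ring

/-- If the torus T_r misses the variety V, then some G in the defining ideal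
of V has hypersurface missing T_r; in particular Log r is not in the
amoeba of V_G. -/
theorem exists_poly_in_ideal_nonvanishing_on_torus (n : ℕ) (V : Set (Fin n → ℂ))
    (hV : V = {z : Fin n → ℂ | (∀ i, z i ≠ 0) ∧
        ∀ f : MvPolynomial (Fin n) ℂ,
          (∀ w ∈ V, MvPolynomial.eval w f = 0) → MvPolynomial.eval z f = 0})
    (r : Fin n → ℝ) (hr : ∀ i, 0 < r i)
    (hdisj : ∀ z ∈ V, ¬ (∀ i, ‖z i‖ = r i)) :
    ∃ G : MvPolynomial (Fin n) ℂ,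
      (∀ w ∈ V, MvPolynomial.eval w G = 0) ∧
      (∀ z : Fin n → ℂ, (∀ i, ‖z i‖ = r i) → MvPolynomial.eval z G ≠ 0) ∧
      (fun i => Real.log (r i)) ∉
        (fun z : Fin n → ℂ => fun i => Real.log ‖z i‖) ''
          {z : Fin n → ℂ | (∀ i, z i ≠ 0) ∧ MvPolynomial.eval z G = 0} := by
  classical
  set T : Set (Fin n → ℂ) := {z | ∀ i, ‖z i‖ = r i} with hT
  have hTcomp : IsCompact T := by
    have : T = Set.pi Set.univ (fun i => Metric.sphere (0 : ℂ) (r i)) := by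
      ext z
      simp [hT, Set.mem_pi, mem_sphere_zero_iff_norm]
    rw [this]
    exact isCompact_univ_pi fun i => isCompact_sphere 0 (r i)
  have hchoice : ∀ z : Fin n → ℂ, ∃ f : MvPolynomial (Fin n) ℂ,
      (∀ w ∈ V, eval w f = 0) ∧ (z ∈ T → eval z f ≠ 0) := by
    intro z
    by_cases hz : z ∈ T
    · have hznV : z ∉ V := fun h => hdisj z h hz
      rw [hV] at hznV
      simp only [Set.mem_setOf_eq, not_and] at hznV
      have hz0 : ∀ i, z i ≠ 0 := by
        intro i h
        have := hz i
        rw [h, norm_zero] at this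
        exact (hr i).ne' this.symm
      have := hznV hz0
      push_neg at this
      obtain ⟨f, hf1, hf2⟩ := this
      exact ⟨f, hf1, fun _ => hf2⟩
    · exact ⟨0, fun w _ => by simp, fun h => absurd h hz⟩
  choose F hF1 hF2 using hchoice
  have hcov : T ⊆ ⋃ z ∈ T, {w | eval w (F z) ≠ 0} := by
    intro z hz
    exact Set.mem_biUnion hz (hF2 z hz)
  obtain ⟨b, hbT, hbfin, hcover⟩ := hTcomp.elim_finite_subcover_image
    (fun z _ => (isOpen_compl_singleton (x := (0:ℂ))).preimage (MvPolynomial.continuous_eval _))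
    hcov
  set t := hbfin.toFinset with ht
  set N := t.sup fun p => (F p).totalDegree with hN
  set G := ∑ p ∈ t, F p * myRefl n N r (F p) with hG
  have hG1 : ∀ w ∈ V, eval w G = 0 := by
    intro w hw
    rw [hG, map_sum]
    apply Finset.sum_eq_zero
    intro p _
    rw [eval_mul, hF1 p w hw, zero_mul]
  have hG2 : ∀ z : Fin n → ℂ, (∀ i, ‖z i‖ = r i) → eval z G ≠ 0 := by
    intro z hz
    have hzT : z ∈ T := hz
    have hz0 : ∀ i, z i ≠ 0 := by
      intro i h
      have := hz i
      rw [h, norm_zero] at this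
      exact (hr i).ne' this.symm
    have heval : eval z G = (∏ i, z i ^ N) *
        ((∑ p ∈ t, Complex.normSq (eval z (F p)) : ℝ) : ℂ) := by
      rw [hG, map_sum]
      push_cast
      rw [Finset.mul_sum]
      apply Finset.sum_congr rfl
      intro p hp
      rw [eval_mul, eval_myRefl n N r (F p) z hz (Finset.le_sup (f := fun p => (F p).totalDegree) hp)]
      rw [← Complex.mul_conj]
      ring
    rw [heval]
    apply mul_ne_zero
    · exact Finset.prod_ne_zero_iff.2 fun i _ => pow_ne_zero _ (hz0 i)
    · have hmem := hcover hzT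
      rw [Set.mem_iUnion₂] at hmem
      obtain ⟨p, hpb, hpz⟩ := hmem
      have hpt : p ∈ t := hbfin.mem_toFinset.2 hpb
      have hpos : 0 < ∑ p ∈ t, Complex.normSq (eval z (F p)) :=
        Finset.sum_pos' (fun q _ => Complex.normSq_nonneg _)
          ⟨p, hpt, Complex.normSq_pos.2 hpz⟩
      exact_mod_cast hpos.ne'
  refine ⟨G, hG1, hG2, ?_⟩
  rintro ⟨z, ⟨hz0, hzG⟩, hlog⟩
  apply hG2 z _ hzG
  intro i
  have h : Real.log ‖z i‖ = Real.log (r i) := congrFun hlog i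
  have hzpos : 0 < ‖z i‖ := norm_pos_iff.2 (hz0 i)
  calc ‖z i‖ = Real.exp (Real.log ‖z i‖) := (Real.exp_log hzpos).symm
    _ = Real.exp (Real.log (r i)) := by rw [h]
    _ = r i := Real.exp_log (hr i)
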